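/- For a linear map L: ℝ² → ℝ² sending a nondegenerate triangle ΔABC to ΔA'B'C' (preserving the vertex correspondence), the singular values λ₁, λ₂ of L satisfy λ₁² + λ₂² = (a'² cot A + b'² cot B + c'² cot C)/(2 area(ΔABC)), where a, b, c (resp. a', b', c') are the side lengths of ΔABC (resp. ΔA'B'C') opposite the corresponding vertices, and A, B, C are the angles of ΔABC. -/

import Mathlib

open Matrix

/-- The Euclidean distance between two points of the plane (as `Fin 2 → ℝ`). -/
noncomputable def edist2 (x y : Fin 2 → ℝ) : ℝ :=
  Real.sqrt ((x 0 - y 0) ^ 2 + (x 1 - y 1) ^ 2)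

/-- The angle opposite the side of length `a` in a Euclidean triangle with side lengths
`a, b, c`, via the law of cosines. -/
noncomputable def angleOf (a b c : ℝ) : ℝ :=
  Real.arccos ((b ^ 2 + c ^ 2 - a ^ 2) / (2 * b * c))

/-- The cotangent. -/
noncomputable def cotan (x : ℝ) : ℝ := Real.cos x / Real.sin x

lemma cot_eq_aux (p0 p1 q0 q1 : ℝ) (hd : p0*q1 - p1*q0 ≠ 0) :
    cotan (angleOf (Real.sqrt ((q0-p0)^2+(q1-p1)^2)) (Real.sqrt (q0^2+q1^2)) (Real.sqrt (p0^2+p1^2)))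
      = (p0*q0+p1*q1)/|p0*q1-p1*q0| := by
  set ip := p0*q0+p1*q1 with hip
  set d := p0*q1-p1*q0 with hdd
  have hd2 : (0:ℝ) < d^2 := by
    have := abs_pos.mpr hd
    nlinarith [sq_abs d]
  have hs : (0:ℝ) < ip^2 + d^2 := by nlinarith [sq_nonneg ip]
  set s := Real.sqrt (ip^2 + d^2) with hss
  have hs0 : 0 < s := Real.sqrt_pos.mpr hs
  have hs2 : s^2 = ip^2 + d^2 := Real.sq_sqrt hs.le
  have hbc : Real.sqrt (q0^2+q1^2) * Real.sqrt (p0^2+p1^2) = s := by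
    rw [← Real.sqrt_mul (by positivity)]
    congr 1
    rw [hip, hdd]; ring
  unfold angleOf
  have harg : (Real.sqrt (q0^2+q1^2) ^2 + Real.sqrt (p0^2+p1^2)^2 - Real.sqrt ((q0-p0)^2+(q1-p1)^2)^2) / (2 * Real.sqrt (q0^2+q1^2) * Real.sqrt (p0^2+p1^2)) = ip / s := by
    rw [Real.sq_sqrt (by positivity), Real.sq_sqrt (by positivity), Real.sq_sqrt (by positivity),
      mul_assoc, hbc, show q0^2+q1^2 + (p0^2+p1^2) - ((q0-p0)^2+(q1-p1)^2) = 2*ip by rw [hip]; ring,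
      mul_div_mul_left _ _ (two_ne_zero)]
  rw [harg]
  unfold cotan
  have hx1 : |ip/s| ≤ 1 := by
    rw [abs_div, abs_of_pos hs0, div_le_one hs0]
    calc |ip| = Real.sqrt (ip^2) := (Real.sqrt_sq_eq_abs ip).symm
    _ ≤ s := Real.sqrt_le_sqrt (by nlinarith)
  obtain ⟨h1', h2'⟩ := abs_le.mp hx1
  rw [Real.cos_arccos h1' h2', Real.sin_arccos]
  have h1 : 1 - (ip/s)^2 = (|d|/s)^2 := by
    rw [div_pow, div_pow, sq_abs, hs2]
    field_simp
    ring
  rw [h1, Real.sqrt_sq (by positivity)]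
  have hda : |d| ≠ 0 := abs_ne_zero.mpr hd
  field_simp

/-- Pinkall–Polthier formula: for a linear map `M = U · diag(l1,l2) · W` (singular values
`l1, l2`) sending a nondegenerate triangle `ΔABC` to `ΔA'B'C'` preserving the vertex
correspondence, `l1² + l2² = (a'² cot A + b'² cot B + c'² cot C)/(2 area(ΔABC))`. -/
theorem singular_value_sum_sq_formula
    (M U W : Matrix (Fin 2) (Fin 2) ℝ) (l1 l2 : ℝ)
    (hl1 : 0 ≤ l1) (hl2 : 0 ≤ l2)
    (hU : U * Uᵀ = 1) (hW : W * Wᵀ = 1)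
    (hsvd : M = U * Matrix.diagonal ![l1, l2] * W)
    (A B C A' B' C' : Fin 2 → ℝ)
    (hnd : Matrix.det (Matrix.of ![B - A, C - A]) ≠ 0)
    (hB : M.mulVec (B - A) = B' - A') (hC : M.mulVec (C - A) = C' - A') :
    l1 ^ 2 + l2 ^ 2 =
      ((edist2 B' C') ^ 2 * cotan (angleOf (edist2 B C) (edist2 A C) (edist2 A B))
        + (edist2 A' C') ^ 2 * cotan (angleOf (edist2 A C) (edist2 B C) (edist2 A B))
        + (edist2 A' B') ^ 2 * cotan (angleOf (edist2 A B) (edist2 B C) (edist2 A C)))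
      / (2 * (|Matrix.det (Matrix.of ![B - A, C - A])| / 2)) := by
  -- notation
  set u0 := B 0 - A 0 with hu0
  set u1 := B 1 - A 1 with hu1
  set v0 := C 0 - A 0 with hv0
  set v1 := C 1 - A 1 with hv1
  set m00 := M 0 0 with hm00
  set m01 := M 0 1 with hm01
  set m10 := M 1 0 with hm10
  set m11 := M 1 1 with hm11
  -- the determinant
  have hdet : Matrix.det (Matrix.of ![B - A, C - A]) = u0*v1 - u1*v0 := by
    rw [Matrix.det_fin_two]
    simp [hu0, hu1, hv0, hv1]
  set d := u0*v1 - u1*v0 with hd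
  rw [hdet] at hnd ⊢
  -- LHS via trace
  have hUtU : Uᵀ * U = 1 := mul_eq_one_comm.mp hU
  set D := Matrix.diagonal ![l1, l2] with hD
  have hMM : Mᵀ * M = Wᵀ * (D * D) * W := by
    rw [hsvd, Matrix.transpose_mul, Matrix.transpose_mul]
    have hDt : Dᵀ = D := Matrix.diagonal_transpose _
    simp only [Matrix.mul_assoc, hDt]
    rw [← Matrix.mul_assoc Uᵀ U, hUtU, Matrix.one_mul]
  have htr : Matrix.trace (Mᵀ*M) = l1^2+l2^2 := by
    rw [hMM, Matrix.trace_mul_cycle, hW, Matrix.one_mul, hD,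
      Matrix.diagonal_mul_diagonal, Matrix.trace_diagonal]
    simp [Fin.sum_univ_two]
    ring
  have hLHS : l1^2 + l2^2 = m00^2 + m01^2 + m10^2 + m11^2 := by
    rw [← htr]
    simp [Matrix.trace_fin_two, Matrix.mul_apply, Fin.sum_univ_two, hm00, hm01, hm10, hm11]
    ring
  -- image vectors
  have hB0 : B' 0 - A' 0 = m00*u0 + m01*u1 := by
    have := congrFun hB 0
    simp [Matrix.mulVec, dotProduct, Fin.sum_univ_two, hu0, hu1, hm00, hm01] at this
    simp only [hm00, hm01, hm10, hm11, hu0, hu1, hv0, hv1]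
    linarith [this]
  have hB1 : B' 1 - A' 1 = m10*u0 + m11*u1 := by
    have := congrFun hB 1
    simp [Matrix.mulVec, dotProduct, Fin.sum_univ_two, hu0, hu1, hm10, hm11] at this
    simp only [hm00, hm01, hm10, hm11, hu0, hu1, hv0, hv1]
    linarith [this]
  have hC0 : C' 0 - A' 0 = m00*v0 + m01*v1 := by
    have := congrFun hC 0
    simp [Matrix.mulVec, dotProduct, Fin.sum_univ_two, hv0, hv1, hm00, hm01] at this
    simp only [hm00, hm01, hm10, hm11, hu0, hu1, hv0, hv1]
    linarith [this]
  have hC1 : C' 1 - A' 1 = m10*v0 + m11*v1 := by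
    have := congrFun hC 1
    simp [Matrix.mulVec, dotProduct, Fin.sum_univ_two, hv0, hv1, hm10, hm11] at this
    simp only [hm00, hm01, hm10, hm11, hu0, hu1, hv0, hv1]
    linarith [this]
  -- squared primed side lengths
  have ea' : edist2 B' C' ^ 2 =
      ((m00*u0+m01*u1) - (m00*v0+m01*v1))^2 + ((m10*u0+m11*u1) - (m10*v0+m11*v1))^2 := by
    rw [edist2, Real.sq_sqrt (by positivity)]
    have e0 : B' 0 - C' 0 = (m00*u0+m01*u1) - (m00*v0+m01*v1) := by
      rw [← hB0, ← hC0]; ring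
    have e1 : B' 1 - C' 1 = (m10*u0+m11*u1) - (m10*v0+m11*v1) := by
      rw [← hB1, ← hC1]; ring
    rw [e0, e1]
  have eb' : edist2 A' C' ^ 2 = (m00*v0+m01*v1)^2 + (m10*v0+m11*v1)^2 := by
    rw [edist2, Real.sq_sqrt (by positivity)]
    have e0 : A' 0 - C' 0 = -(m00*v0+m01*v1) := by rw [← hC0]; ring
    have e1 : A' 1 - C' 1 = -(m10*v0+m11*v1) := by rw [← hC1]; ring
    rw [e0, e1]; ring
  have ec' : edist2 A' B' ^ 2 = (m00*u0+m01*u1)^2 + (m10*u0+m11*u1)^2 := by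
    rw [edist2, Real.sq_sqrt (by positivity)]
    have e0 : A' 0 - B' 0 = -(m00*u0+m01*u1) := by rw [← hB0]; ring
    have e1 : A' 1 - B' 1 = -(m10*u0+m11*u1) := by rw [← hB1]; ring
    rw [e0, e1]; ring
  -- edist2 expressions for the original triangle
  have dBC : edist2 B C = Real.sqrt ((v0-u0)^2+(v1-u1)^2) := by
    rw [edist2]; congr 1; rw [hu0, hu1, hv0, hv1]; ring
  have dAC : edist2 A C = Real.sqrt (v0^2+v1^2) := by
    rw [edist2]; congr 1; rw [hv0, hv1]; ring
  have dAB : edist2 A B = Real.sqrt (u0^2+u1^2) := by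
    rw [edist2]; congr 1; rw [hu0, hu1]; ring
  -- the three cotangents
  have hcotA : cotan (angleOf (edist2 B C) (edist2 A C) (edist2 A B))
      = (u0*v0+u1*v1)/|d| := by
    rw [dBC, dAC, dAB]
    exact cot_eq_aux u0 u1 v0 v1 hnd
  have hcotB : cotan (angleOf (edist2 A C) (edist2 B C) (edist2 A B))
      = (u0*(u0-v0)+u1*(u1-v1))/|d| := by
    have h := cot_eq_aux (-u0) (-u1) (v0-u0) (v1-u1)
      (by rw [show (-u0)*(v1-u1) - (-u1)*(v0-u0) = -d by rw [hd]; ring]; simpa using hnd)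
    rw [show ((v0-u0) - -u0)^2 + ((v1-u1) - -u1)^2 = v0^2+v1^2 by ring,
        show (-u0)^2+(-u1)^2 = u0^2+u1^2 by ring,
        show (-u0)*(v0-u0) + (-u1)*(v1-u1) = u0*(u0-v0)+u1*(u1-v1) by ring,
        show (-u0)*(v1-u1) - (-u1)*(v0-u0) = -d by rw [hd]; ring, abs_neg] at h
    rw [dBC, dAC, dAB]
    exact h
  have hcotC : cotan (angleOf (edist2 A B) (edist2 B C) (edist2 A C))
      = (v0*(v0-u0)+v1*(v1-u1))/|d| := by
    have h := cot_eq_aux (-v0) (-v1) (u0-v0) (u1-v1)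
      (by rw [show (-v0)*(u1-v1) - (-v1)*(u0-v0) = d by rw [hd]; ring]; exact hnd)
    rw [show ((u0-v0) - -v0)^2 + ((u1-v1) - -v1)^2 = u0^2+u1^2 by ring,
        show (-v0)^2+(-v1)^2 = v0^2+v1^2 by ring,
        show (-v0)*(u0-v0) + (-v1)*(u1-v1) = v0*(v0-u0)+v1*(v1-u1) by ring,
        show (-v0)*(u1-v1) - (-v1)*(u0-v0) = d by rw [hd]; ring,
        show (u0-v0)^2+(u1-v1)^2 = (v0-u0)^2+(v1-u1)^2 by ring] at h
    rw [dAB, dBC, dAC]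
    exact h
  -- put it together
  rw [hLHS, ea', eb', ec', hcotA, hcotB, hcotC]
  have ht : |d| ≠ 0 := abs_ne_zero.mpr hnd
  rw [show (2:ℝ)*(|d|/2) = |d| by ring, ← mul_div_assoc, ← mul_div_assoc, ← mul_div_assoc,
    ← add_div, ← add_div, div_div, abs_mul_abs_self,
    eq_div_iff (mul_ne_zero hnd hnd)]
  ring
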